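/- Let K, M be positive integers with M ≤ K, let 1 ≤ W ≤ M, and let the K nodes be partitioned into W nonempty groups with largest group size ℓ. Set w = ℓ + 1, let p be a prime with p ≥ max{w, 2W−2}, and let q be an integer coprime with both p and 2W satisfying q ≥ 2w−1. Then there exists an (M,K,L)-schedule sequence set with respect to this partition, with period L = 2Wpq. (The set is produced by Construction *, which builds each node's sequence from a 2W × pq array whose rows are CRT-UI sequences shifted by pre-assigned offsets δ_m determined by Φ_{p,q}(δ_m) = (m−1, 0).) -/
import Mathlib


/-- A schedule symbol for a system with `W` channels: `T m` means "transmit on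
channel `m`" and `R r` means "receive on channel `r`". -/
inductive SchedSym (W : ℕ) where
  | T : Fin W → SchedSym W
  | R : Fin W → SchedSym W
deriving DecidableEq

/-- `IsScheduleSet W K L G s` says that `s` is an `(M,K,L)`-schedule sequence set
(for any number of channels `M ≥ W`) with respect to the partition of the `K` nodes
into the `W` groups given by the group-assignment map `G` (node `i` lies in group
`G i`). Sequences are modeled as `ℕ → SchedSym W`, indexed modulo `L`.

* `own_channel`: a node in group `m` only uses the transmit symbol `T m`;
* `intra`: intra-group requirement (eq. (1) of the paper) for all offsets `τ ∈ Z_L^K`;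
* `inter`: inter-group requirement (eq. (2) of the paper) for all offsets `τ ∈ Z_L^K`. -/
structure IsScheduleSet (W K L : ℕ) (G : Fin K → Fin W)
    (s : Fin K → ℕ → SchedSym W) : Prop where
  own_channel : ∀ (i : Fin K) (t : ℕ) (m : Fin W), s i t = SchedSym.T m → m = G i
  intra : ∀ τ : Fin K → ℕ, (∀ i, τ i < L) → ∀ i j : Fin K, i ≠ j → G i = G j →
    ∃ t < L, s i ((t + τ i) % L) = SchedSym.T (G i) ∧
      s j ((t + τ j) % L) = SchedSym.R (G i) ∧
      ∀ x : Fin K, x ≠ i → x ≠ j → G x = G i → s x ((t + τ x) % L) ≠ SchedSym.T (G i)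
  inter : ∀ τ : Fin K → ℕ, (∀ i, τ i < L) → ∀ i j : Fin K, G i ≠ G j →
    ∃ t < L, s i ((t + τ i) % L) = SchedSym.T (G i) ∧
      s j ((t + τ j) % L) = SchedSym.R (G i) ∧
      ∀ x : Fin K, x ≠ i → G x = G i → s x ((t + τ x) % L) ≠ SchedSym.T (G i)

/-- The size of group `m` under the group-assignment map `G`. -/
def groupSize {W K : ℕ} (G : Fin K → Fin W) (m : Fin W) : ℕ :=
  (Finset.univ.filter (fun i => G i = m)).card



private lemma aux_mod_shift (n a τ : ℕ) (hn : 0 < n) :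
    (a + (n - τ % n) + τ) % n = a % n := by
  have h2 := Nat.mod_add_div τ n
  have h : τ % n < n := Nat.mod_lt _ hn
  set d := τ / n with hd
  set nd := n * d with hnd
  have h3 : n * (1 + d) = n + nd := by rw [hnd]; ring
  have e : a + (n - τ % n) + τ = a + n * (1 + d) := by omega
  rw [e]
  exact Nat.add_mul_mod_self_left a n (1 + d)

private lemma aux_shift_diff (q w u u' d : ℕ) (hq : 2 * w ≤ q + 1)
    (hu : u < w) (hu' : u' < w)
    (h1 : (u + d) % q < w) (h2 : (u' + d) % q < w) :
    (u + d) % q + u' = (u' + d) % q + u := by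
  have hq0 : 0 < q := by omega
  have hb : d % q < q := Nat.mod_lt _ hq0
  have e0 : (u + d) % q = (u + d % q) % q := by
    rw [Nat.add_mod, Nat.mod_eq_of_lt (show u < q by omega)]
  have e0' : (u' + d) % q = (u' + d % q) % q := by
    rw [Nat.add_mod, Nat.mod_eq_of_lt (show u' < q by omega)]
  rw [e0] at h1 ⊢
  rw [e0'] at h2 ⊢
  have v1 : (u + d % q) % q = u + d % q ∨
      (q ≤ u + d % q ∧ (u + d % q) % q + q = u + d % q) := by
    rcases Nat.lt_or_ge (u + d % q) q with c | c
    · exact Or.inl (Nat.mod_eq_of_lt c)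
    · refine Or.inr ⟨c, ?_⟩
      rw [Nat.mod_eq_sub_mod c, Nat.mod_eq_of_lt (by omega)]
      omega
  have v2 : (u' + d % q) % q = u' + d % q ∨
      (q ≤ u' + d % q ∧ (u' + d % q) % q + q = u' + d % q) := by
    rcases Nat.lt_or_ge (u' + d % q) q with c | c
    · exact Or.inl (Nat.mod_eq_of_lt c)
    · refine Or.inr ⟨c, ?_⟩
      rw [Nat.mod_eq_sub_mod c, Nat.mod_eq_of_lt (by omega)]
      omega
  omega

private lemma aux_card_le_one (p : ℕ) (hp : p.Prime) (q w C B dq dp gi gx : ℕ)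
    (hq : 2 * w ≤ q + 1) (hwp : w ≤ p) (hgne : (gi : ZMod p) ≠ (gx : ZMod p)) :
    ((Finset.range w).filter (fun u => (u + dq) % q < w ∧
      (gi * u + C + dp) % p = (gx * ((u + dq) % q) + B) % p)).card ≤ 1 := by
  haveI := Fact.mk hp
  rw [Finset.card_le_one]
  intro u hu u' hu'
  simp only [Finset.mem_filter, Finset.mem_range] at hu hu'
  obtain ⟨huw, hu1, hu2⟩ := hu
  obtain ⟨hu'w, hu'1, hu'2⟩ := hu'
  have key := aux_shift_diff q w u u' dq hq huw hu'w hu1 hu'1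
  have e1 : ((gi * u + C + dp : ℕ) : ZMod p) = ((gx * ((u + dq) % q) + B : ℕ) : ZMod p) := by
    rw [ZMod.natCast_eq_natCast_iff]; exact hu2
  have e2 : ((gi * u' + C + dp : ℕ) : ZMod p) = ((gx * ((u' + dq) % q) + B : ℕ) : ZMod p) := by
    rw [ZMod.natCast_eq_natCast_iff]; exact hu'2
  push_cast at e1 e2
  have keyC : (((u + dq) % q : ℕ) : ZMod p) + (u' : ZMod p)
      = (((u' + dq) % q : ℕ) : ZMod p) + (u : ZMod p) := by
    exact_mod_cast congrArg (Nat.cast : ℕ → ZMod p) key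
  have hz : ((gi : ZMod p) - gx) * ((u : ZMod p) - u') = 0 := by
    linear_combination e1 - e2 + (gx : ZMod p) * keyC
  rcases mul_eq_zero.mp hz with h | h
  · exact absurd (sub_eq_zero.mp h) hgne
  · have huu : (u : ZMod p) = (u' : ZMod p) := sub_eq_zero.mp h
    have := (ZMod.natCast_eq_natCast_iff _ _ _).mp huu
    have h3 : u % p = u' % p := this
    rw [Nat.mod_eq_of_lt (by omega), Nat.mod_eq_of_lt (by omega)] at h3
    exact h3

private lemma aux_crt (W p q u₀ x₀ r₀ : ℕ) (hW : 0 < W) (hp : 0 < p) (hq : 0 < q)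
    (hqp : Nat.Coprime q p) (hpN : Nat.Coprime p (2 * W)) (hqN : Nat.Coprime q (2 * W)) :
    ∃ t < 2 * W * (p * q),
      (∀ a, (t + a) % (2 * W * (p * q)) % q = (u₀ + a) % q) ∧
      (∀ a, (t + a) % (2 * W * (p * q)) % p = (x₀ + a) % p) ∧
      (∀ a, (t + a) % (2 * W * (p * q)) % (2 * W) = (r₀ + a) % (2 * W)) := by
  have hdq : q ∣ 2 * W * (p * q) := ⟨2 * W * p, by ring⟩
  have hdp : p ∣ 2 * W * (p * q) := ⟨2 * W * q, by ring⟩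
  have hdN : (2 * W) ∣ 2 * W * (p * q) := ⟨p * q, rfl⟩
  have hL0 : 0 < 2 * W * (p * q) := by positivity
  have hqpN : Nat.Coprime q (p * (2 * W)) := Nat.Coprime.mul_right hqp hqN
  obtain ⟨c1, hc1p, hc1N⟩ := Nat.chineseRemainder hpN x₀ r₀
  obtain ⟨c2, hc2q, hc2pn⟩ := Nat.chineseRemainder hqpN u₀ c1
  have hc2p : c2 ≡ x₀ [MOD p] :=
    (Nat.ModEq.of_dvd (dvd_mul_right p (2 * W)) hc2pn).trans hc1p
  have hc2N : c2 ≡ r₀ [MOD 2 * W] :=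
    (Nat.ModEq.of_dvd (dvd_mul_left (2 * W) p) hc2pn).trans hc1N
  refine ⟨c2 % (2 * W * (p * q)), Nat.mod_lt _ hL0, ?_, ?_, ?_⟩
  · intro a
    rw [Nat.mod_mod_of_dvd _ hdq]
    have h2 : c2 % (2 * W * (p * q)) ≡ c2 [MOD q] := Nat.mod_mod_of_dvd c2 hdq
    exact (h2.add_right a).trans (hc2q.add_right a)
  · intro a
    rw [Nat.mod_mod_of_dvd _ hdp]
    have h2 : c2 % (2 * W * (p * q)) ≡ c2 [MOD p] := Nat.mod_mod_of_dvd c2 hdp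
    exact (h2.add_right a).trans (hc2p.add_right a)
  · intro a
    rw [Nat.mod_mod_of_dvd _ hdN]
    have h2 : c2 % (2 * W * (p * q)) ≡ c2 [MOD 2 * W] := Nat.mod_mod_of_dvd c2 hdN
    exact (h2.add_right a).trans (hc2N.add_right a)

private def ccv (W : ℕ) (m : Fin W) (r : ℕ) : ℕ := if r < W then 0 else m.val

private def starSeq (W ℓ p q : ℕ) (hW : 0 < W) (m : Fin W) (g : ℕ) : ℕ → SchedSym W :=
  fun t =>
    if t % q < ℓ + 1 ∧ t % p = (g * (t % q) + ccv W m (t % (2 * W))) % p then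
      SchedSym.T m
    else SchedSym.R ⟨t % (2 * W) % W, Nat.mod_lt _ hW⟩

private lemma engine (K W ℓ p q : ℕ) (hW : 0 < W) (hp : 0 < p) (hq0 : 0 < q)
    (hqp : Nat.Coprime q p) (hpN : Nat.Coprime p (2 * W)) (hqN : Nat.Coprime q (2 * W))
    (hwq : ℓ + 1 ≤ q)
    (G : Fin K → Fin W) (gl : Fin K → ℕ) (τ : Fin K → ℕ) (i j : Fin K)
    (c u : ℕ) (hc : c ≤ 1) (hu : u < ℓ + 1)
    (hP1 : ∀ x : Fin K, x ≠ i → x ≠ j → G x = G i →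
      ¬ (((u + ((q - τ i % q) + τ x)) % q < ℓ + 1) ∧
        (gl i * u + ccv W (G i) ((((G i).val + c * W + (2 * W - τ j % (2 * W))) + τ i) % (2 * W))
            + ((p - τ i % p) + τ x)) % p
          = (gl x * ((u + ((q - τ i % q) + τ x)) % q)
            + ccv W (G x) ((((G i).val + c * W + (2 * W - τ j % (2 * W))) + τ x) % (2 * W))) % p))
    (hP2 : ¬ (((u + ((q - τ i % q) + τ j)) % q < ℓ + 1) ∧
        (gl i * u + ccv W (G i) ((((G i).val + c * W + (2 * W - τ j % (2 * W))) + τ i) % (2 * W))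
            + ((p - τ i % p) + τ j)) % p
          = (gl j * ((u + ((q - τ i % q) + τ j)) % q)
            + ccv W (G j) ((((G i).val + c * W + (2 * W - τ j % (2 * W))) + τ j) % (2 * W))) % p)) :
    ∃ t < 2 * W * (p * q),
      starSeq W ℓ p q hW (G i) (gl i) ((t + τ i) % (2 * W * (p * q))) = SchedSym.T (G i) ∧
      starSeq W ℓ p q hW (G j) (gl j) ((t + τ j) % (2 * W * (p * q))) = SchedSym.R (G i) ∧
      ∀ x : Fin K, x ≠ i → x ≠ j → G x = G i →
        starSeq W ℓ p q hW (G x) (gl x) ((t + τ x) % (2 * W * (p * q))) ≠ SchedSym.T (G i) := by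
  have hcW : c * W ≤ W := by
    calc c * W ≤ 1 * W := Nat.mul_le_mul_right W hc
    _ = W := one_mul W
  obtain ⟨t, htL, hQ, hP, hR⟩ := aux_crt W p q
    (u + (q - τ i % q))
    ((gl i * u + ccv W (G i) ((((G i).val + c * W + (2 * W - τ j % (2 * W))) + τ i) % (2 * W)))
      + (p - τ i % p))
    ((G i).val + c * W + (2 * W - τ j % (2 * W)))
    hW hp hq0 hqp hpN hqN
  have hNpos : 0 < 2 * W := by omega
  -- component facts
  have hui : (t + τ i) % (2 * W * (p * q)) % q = u := by
    rw [hQ (τ i), aux_mod_shift q u (τ i) hq0, Nat.mod_eq_of_lt (by omega)]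
  have hri : (t + τ i) % (2 * W * (p * q)) % (2 * W)
      = (((G i).val + c * W + (2 * W - τ j % (2 * W))) + τ i) % (2 * W) := hR (τ i)
  have hxi : (t + τ i) % (2 * W * (p * q)) % p
      = (gl i * u + ccv W (G i) ((((G i).val + c * W + (2 * W - τ j % (2 * W))) + τ i) % (2 * W))) % p := by
    rw [hP (τ i)]
    exact aux_mod_shift p _ (τ i) hp
  refine ⟨t, htL, ?_, ?_, ?_⟩
  · simp only [starSeq]
    rw [if_pos]
    constructor
    · rw [hui]; omega
    · rw [hxi, hui, hri]
  · -- receiver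
    have hQj : (t + τ j) % (2 * W * (p * q)) % q = (u + ((q - τ i % q) + τ j)) % q := by
      rw [hQ (τ j)]; congr 1; omega
    have hPj : (t + τ j) % (2 * W * (p * q)) % p
        = ((gl i * u + ccv W (G i) ((((G i).val + c * W + (2 * W - τ j % (2 * W))) + τ i) % (2 * W)))
          + ((p - τ i % p) + τ j)) % p := by
      rw [hP (τ j)]; congr 1; omega
    have hRj : (t + τ j) % (2 * W * (p * q)) % (2 * W)
        = (((G i).val + c * W + (2 * W - τ j % (2 * W))) + τ j) % (2 * W) := hR (τ j)
    have hrj2 : (((G i).val + c * W + (2 * W - τ j % (2 * W))) + τ j) % (2 * W)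
        = (G i).val + c * W := by
      rw [aux_mod_shift (2 * W) ((G i).val + c * W) (τ j) hNpos]
      exact Nat.mod_eq_of_lt (by have := (G i).isLt; omega)
    simp only [starSeq]
    rw [if_neg]
    · congr 1
      apply Fin.ext
      show (t + τ j) % (2 * W * (p * q)) % (2 * W) % W = (G i).val
      rw [hRj, hrj2, Nat.add_mul_mod_self_right]
      exact Nat.mod_eq_of_lt (G i).isLt
    · rw [hQj, hPj, hRj]
      exact hP2
  · intro x hxi' hxj' hxG
    have hQx : (t + τ x) % (2 * W * (p * q)) % q = (u + ((q - τ i % q) + τ x)) % q := by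
      rw [hQ (τ x)]; congr 1; omega
    have hPx : (t + τ x) % (2 * W * (p * q)) % p
        = ((gl i * u + ccv W (G i) ((((G i).val + c * W + (2 * W - τ j % (2 * W))) + τ i) % (2 * W)))
          + ((p - τ i % p) + τ x)) % p := by
      rw [hP (τ x)]; congr 1; omega
    have hRx : (t + τ x) % (2 * W * (p * q)) % (2 * W)
        = (((G i).val + c * W + (2 * W - τ j % (2 * W))) + τ x) % (2 * W) := hR (τ x)
    simp only [starSeq]
    split_ifs with hcond
    · exfalso
      apply hP1 x hxi' hxj' hxG
      rw [hQx, hPx, hRx] at hcond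
      exact hcond
    · simp

set_option maxHeartbeats 1000000 in
private lemma main_case (K W ℓ p q : ℕ) (hW : 1 ≤ W)
    (G : Fin K → Fin W) (gl : Fin K → ℕ)
    (hgl : ∀ i, gl i < ℓ)
    (hginj : ∀ i j : Fin K, G i = G j → gl i = gl j → i = j)
    (hsize : ∀ m : Fin W, (Finset.univ.filter (fun x => G x = m)).card ≤ ℓ)
    (hp : p.Prime) (hp2 : p ≠ 2)
    (hpw : ℓ + 1 ≤ p) (hpW : 2 * W - 2 ≤ p)
    (hqp : Nat.Coprime q p) (hqW : Nat.Coprime q (2 * W))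
    (hq : 2 * (ℓ + 1) - 1 ≤ q) :
    ∃ s : Fin K → ℕ → SchedSym W, IsScheduleSet W K (2 * W * (p * q)) G s := by
  classical
  have hW0 : 0 < W := hW
  have hp0 : 0 < p := hp.pos
  have hp3 : 2 ≤ p := hp.two_le
  have hq0 : 0 < q := by omega
  have hwq : ℓ + 1 ≤ q := by omega
  have hq2 : 2 * (ℓ + 1) ≤ q + 1 := by omega
  haveI := Fact.mk hp
  have hpN : Nat.Coprime p (2 * W) := by
    rw [Nat.Prime.coprime_iff_not_dvd hp]
    intro hdvd
    rcases (Nat.Prime.dvd_mul hp).mp hdvd with h | h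
    · have : p = 2 := (Nat.prime_dvd_prime_iff_eq hp Nat.prime_two).mp h
      exact hp2 this
    · have : p ≤ W := Nat.le_of_dvd hW0 h
      omega
  -- label casting helper
  have hglZ : ∀ x y : Fin K, G x = G y → x ≠ y → (gl y : ZMod p) ≠ (gl x : ZMod p) := by
    intro x y hxy hne h
    have h2 : gl y % p = gl x % p := (ZMod.natCast_eq_natCast_iff _ _ _).mp h
    rw [Nat.mod_eq_of_lt (by have := hgl y; omega), Nat.mod_eq_of_lt (by have := hgl x; omega)] at h2
    exact hne (hginj y x hxy.symm h2).symm
  refine ⟨fun i => starSeq W ℓ p q hW0 (G i) (gl i), ?_, ?_, ?_⟩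
  · intro i t m h
    simp only [starSeq] at h
    split_ifs at h with hc
    all_goals first
      | (injection h with h'; exact h'.symm)
      | (cases h)
  · -- intra
    intro τ hτ i j hij hGij
    -- bad sets
    set ms : Finset (Fin K) := Finset.univ.filter (fun x => x ≠ i ∧ x ≠ j ∧ G x = G i) with hms
    have hmscard : ms.card ≤ ℓ - 1 := by
      have hsub : ms ⊆ (Finset.univ.filter (fun x => G x = G i)).erase i := by
        intro x hx
        simp only [hms, Finset.mem_filter, Finset.mem_univ, true_and] at hx
        exact Finset.mem_erase.mpr ⟨hx.1, Finset.mem_filter.mpr ⟨Finset.mem_univ _, hx.2.2⟩⟩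
      have h1 := Finset.card_le_card hsub
      have hmemi : i ∈ Finset.univ.filter (fun x => G x = G i) :=
        Finset.mem_filter.mpr ⟨Finset.mem_univ _, rfl⟩
      have h2 := Finset.card_erase_of_mem hmemi
      have := hsize (G i)
      omega
    set Bset : Fin K → Finset ℕ := fun x => (Finset.range (ℓ + 1)).filter (fun v =>
      (v + ((q - τ i % q) + τ x)) % q < ℓ + 1 ∧
      (gl i * v + ccv W (G i) ((((G i).val + 0 * W + (2 * W - τ j % (2 * W))) + τ i) % (2 * W))
          + ((p - τ i % p) + τ x)) % p
        = (gl x * ((v + ((q - τ i % q) + τ x)) % q)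
          + ccv W (G x) ((((G i).val + 0 * W + (2 * W - τ j % (2 * W))) + τ x) % (2 * W))) % p) with hBset
    have hBcard : ∀ x : Fin K, G x = G i → x ≠ i → (Bset x).card ≤ 1 := by
      intro x hxG hxi
      exact aux_card_le_one p hp q (ℓ + 1) _ _ _ _ (gl i) (gl x) hq2 hpw (hglZ x i hxG hxi)
    set bad : Finset ℕ := ms.biUnion Bset ∪ Bset j with hbad
    have hbadcard : bad.card ≤ ℓ := by
      rw [hbad]
      have h1 : (ms.biUnion Bset).card ≤ ms.card := by
        refine le_trans (Finset.card_biUnion_le) ?_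
        calc ∑ x ∈ ms, (Bset x).card ≤ ∑ _x ∈ ms, 1 := by
              refine Finset.sum_le_sum ?_
              intro x hx
              simp only [hms, Finset.mem_filter] at hx
              exact hBcard x hx.2.2.2 hx.2.1
          _ = ms.card := by simp
      have h2 : (Bset j).card ≤ 1 := hBcard j hGij.symm (Ne.symm hij)
      have := Finset.card_union_le (ms.biUnion Bset) (Bset j)
      have hl1 : 1 ≤ ℓ := by have := hgl i; omega
      omega
    obtain ⟨u, huw, hub⟩ : ∃ u, u < ℓ + 1 ∧ u ∉ bad := by
      by_contra hcon
      push_neg at hcon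
      have hsub : Finset.range (ℓ + 1) ⊆ bad := by
        intro v hv
        exact hcon v (Finset.mem_range.mp hv)
      have := Finset.card_le_card hsub
      rw [Finset.card_range] at this
      omega
    obtain ⟨t, htL, h1, h2, h3⟩ := engine K W ℓ p q hW0 hp0 hq0 hqp hpN hqW hwq G gl τ i j 0 u
      (by omega) huw
      (by
        intro x hxi hxj hxG hcond
        apply hub
        refine Finset.mem_union_left _ (Finset.mem_biUnion.mpr ⟨x, ?_, ?_⟩)
        · simp only [hms, Finset.mem_filter, Finset.mem_univ, true_and]
          exact ⟨hxi, hxj, hxG⟩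
        · simp only [hBset, Finset.mem_filter, Finset.mem_range]
          exact ⟨huw, hcond⟩)
      (by
        intro hcond
        apply hub
        refine Finset.mem_union_right _ ?_
        simp only [hBset, Finset.mem_filter, Finset.mem_range]
        exact ⟨huw, hcond⟩)
    exact ⟨t, htL, h1, h2, h3⟩
  · -- inter
    intro τ hτ i j hGij
    have hvne : (G i).val ≠ (G j).val := fun h => hGij (Fin.ext h)
    have hiv := (G i).isLt
    have hjv := (G j).isLt
    have hW2 : 2 ≤ W := by omega
    have hWp : W ≤ p := by omega
    have hNpos : 0 < 2 * W := by omega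
    have hij : i ≠ j := fun h => hGij (congrArg G h)
    set ms : Finset (Fin K) := Finset.univ.filter (fun x => x ≠ i ∧ x ≠ j ∧ G x = G i) with hms
    have hmscard : ms.card ≤ ℓ - 1 := by
      have hsub : ms ⊆ (Finset.univ.filter (fun x => G x = G i)).erase i := by
        intro x hx
        simp only [hms, Finset.mem_filter, Finset.mem_univ, true_and] at hx
        exact Finset.mem_erase.mpr ⟨hx.1, Finset.mem_filter.mpr ⟨Finset.mem_univ _, hx.2.2⟩⟩
      have h1 := Finset.card_le_card hsub
      have hmemi : i ∈ Finset.univ.filter (fun x => G x = G i) :=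
        Finset.mem_filter.mpr ⟨Finset.mem_univ _, rfl⟩
      have h2 := Finset.card_erase_of_mem hmemi
      have := hsize (G i)
      omega
    have hl1 : 1 ≤ ℓ := by have := hgl i; omega
    have hBcard : ∀ (c : ℕ) (x : Fin K), G x = G i → x ≠ i →
        ((Finset.range (ℓ + 1)).filter (fun v =>
          (v + ((q - τ i % q) + τ x)) % q < ℓ + 1 ∧
          (gl i * v + ccv W (G i) ((((G i).val + c * W + (2 * W - τ j % (2 * W))) + τ i) % (2 * W))
              + ((p - τ i % p) + τ x)) % p
            = (gl x * ((v + ((q - τ i % q) + τ x)) % q)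
              + ccv W (G x) ((((G i).val + c * W + (2 * W - τ j % (2 * W))) + τ x) % (2 * W))) % p)).card ≤ 1 := by
      intro c x hxG hxi
      exact aux_card_le_one p hp q (ℓ + 1) _ _ _ _ (gl i) (gl x) hq2 hpw (hglZ x i hxG hxi)
    have hrow : ∃ c ≤ 1, ∃ S : Finset ℕ, S.card ≤ 1 ∧ ∀ v, v < ℓ + 1 → v ∉ S →
        ¬ ((v + ((q - τ i % q) + τ j)) % q < ℓ + 1 ∧
          (gl i * v + ccv W (G i) ((((G i).val + c * W + (2 * W - τ j % (2 * W))) + τ i) % (2 * W))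
              + ((p - τ i % p) + τ j)) % p
            = (gl j * ((v + ((q - τ i % q) + τ j)) % q)
              + ccv W (G j) ((((G i).val + c * W + (2 * W - τ j % (2 * W))) + τ j) % (2 * W))) % p) := by
      by_cases hgg : gl i = gl j
      · -- same label: use the two-row trick, empty escape set
        by_cases hk0 : ∃ v, v < ℓ + 1 ∧
            ((v + ((q - τ i % q) + τ j)) % q < ℓ + 1 ∧
            (gl i * v + ccv W (G i) ((((G i).val + 0 * W + (2 * W - τ j % (2 * W))) + τ i) % (2 * W))
                + ((p - τ i % p) + τ j)) % p
              = (gl j * ((v + ((q - τ i % q) + τ j)) % q)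
                + ccv W (G j) ((((G i).val + 0 * W + (2 * W - τ j % (2 * W))) + τ j) % (2 * W))) % p)
        · refine ⟨1, le_refl 1, ∅, by simp, ?_⟩
          intro v' hv' _ hcond'
          obtain ⟨v, hv, hv1, hv2⟩ := hk0
          obtain ⟨hv1', hv2'⟩ := hcond'
          rw [← hgg] at hv2 hv2'
          have hrj0 : (((G i).val + 0 * W + (2 * W - τ j % (2 * W))) + τ j) % (2 * W) = (G i).val := by
            rw [aux_mod_shift (2 * W) _ (τ j) hNpos]
            have e : (G i).val + 0 * W = (G i).val := by omega
            rw [e]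
            exact Nat.mod_eq_of_lt (by omega)
          have hrj1 : (((G i).val + 1 * W + (2 * W - τ j % (2 * W))) + τ j) % (2 * W) = (G i).val + W := by
            rw [aux_mod_shift (2 * W) _ (τ j) hNpos]
            have e : (G i).val + 1 * W = (G i).val + W := by omega
            rw [e]
            exact Nat.mod_eq_of_lt (by omega)
          rw [hrj0] at hv2
          rw [hrj1] at hv2'
          have hD0 : ccv W (G j) ((G i).val) = 0 := by
            simp only [ccv, if_pos hiv]
          have hD1 : ccv W (G j) ((G i).val + W) = (G j).val := by
            simp only [ccv, if_neg (by omega : ¬ ((G i).val + W < W))]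
          rw [hD0] at hv2
          rw [hD1] at hv2'
          have hri1 : ((G i).val + 1 * W + (2 * W - τ j % (2 * W)) + τ i) % (2 * W)
              = (((G i).val + 0 * W + (2 * W - τ j % (2 * W)) + τ i) % (2 * W) + W) % (2 * W) := by
            have e : (G i).val + 1 * W + (2 * W - τ j % (2 * W)) + τ i
                = ((G i).val + 0 * W + (2 * W - τ j % (2 * W)) + τ i) + W := by omega
            rw [e, Nat.add_mod _ W, Nat.mod_eq_of_lt (show W < 2 * W by omega)]
          rw [hri1] at hv2'
          set r0 : ℕ := ((G i).val + 0 * W + (2 * W - τ j % (2 * W)) + τ i) % (2 * W) with hr0def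
          have hr0N : r0 < 2 * W := Nat.mod_lt _ hNpos
          have key := aux_shift_diff q (ℓ + 1) v v' ((q - τ i % q) + τ j) hq2 hv hv' hv1 hv1'
          have E0 : ((gl i * v + ccv W (G i) r0 + ((p - τ i % p) + τ j) : ℕ) : ZMod p)
              = ((gl i * ((v + ((q - τ i % q) + τ j)) % q) + 0 : ℕ) : ZMod p) := by
            rw [ZMod.natCast_eq_natCast_iff]; exact hv2
          have E1 : ((gl i * v' + ccv W (G i) ((r0 + W) % (2 * W)) + ((p - τ i % p) + τ j) : ℕ) : ZMod p)
              = ((gl i * ((v' + ((q - τ i % q) + τ j)) % q) + (G j).val : ℕ) : ZMod p) := by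
            rw [ZMod.natCast_eq_natCast_iff]; exact hv2'
          push_cast at E0 E1
          have keyC : (((v + ((q - τ i % q) + τ j)) % q : ℕ) : ZMod p) + (v' : ZMod p)
              = (((v' + ((q - τ i % q) + τ j)) % q : ℕ) : ZMod p) + (v : ZMod p) := by
            exact_mod_cast congrArg (Nat.cast : ℕ → ZMod p) key
          have hC : ((ccv W (G i) r0 : ℕ) : ZMod p) + (((G j).val : ℕ) : ZMod p)
              = ((ccv W (G i) ((r0 + W) % (2 * W)) : ℕ) : ZMod p) := by
            linear_combination E0 - E1 + (gl i : ZMod p) * keyC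
          rcases Nat.lt_or_ge r0 W with hcase | hcase
          · have hC0 : ccv W (G i) r0 = 0 := by simp only [ccv, if_pos hcase]
            have e1 : (r0 + W) % (2 * W) = r0 + W := Nat.mod_eq_of_lt (by omega)
            have hC1 : ccv W (G i) ((r0 + W) % (2 * W)) = (G i).val := by
              rw [e1]; simp only [ccv, if_neg (by omega : ¬ (r0 + W < W))]
            rw [hC0, hC1] at hC
            norm_num at hC
            have h2 : (G j).val % p = (G i).val % p := (ZMod.natCast_eq_natCast_iff _ _ _).mp hC
            rw [Nat.mod_eq_of_lt (by omega), Nat.mod_eq_of_lt (by omega)] at h2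
            omega
          · have hC0 : ccv W (G i) r0 = (G i).val := by
              simp only [ccv, if_neg (by omega : ¬ (r0 < W))]
            have e1 : (r0 + W) % (2 * W) = r0 - W := by
              rw [Nat.mod_eq_sub_mod (by omega : 2 * W ≤ r0 + W)]
              have e2 : r0 + W - 2 * W = r0 - W := by omega
              rw [e2]
              exact Nat.mod_eq_of_lt (by omega)
            have hC1 : ccv W (G i) ((r0 + W) % (2 * W)) = 0 := by
              rw [e1]; simp only [ccv, if_pos (by omega : r0 - W < W)]
            rw [hC0, hC1] at hC
            have hsum : (((G i).val + (G j).val : ℕ) : ZMod p) = ((0 : ℕ) : ZMod p) := by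
              push_cast
              linear_combination hC
            have h2 : ((G i).val + (G j).val) % p = 0 % p :=
              (ZMod.natCast_eq_natCast_iff _ _ _).mp hsum
            rw [Nat.zero_mod, Nat.mod_eq_of_lt (by omega : (G i).val + (G j).val < p)] at h2
            omega
        · refine ⟨0, by omega, ∅, by simp, ?_⟩
          intro v hv _ hcond
          exact hk0 ⟨v, hv, hcond⟩
      · -- different labels: j is one extra blocker at row 0
        have hgneZ : (gl i : ZMod p) ≠ (gl j : ZMod p) := by
          intro h
          have h2 : gl i % p = gl j % p := (ZMod.natCast_eq_natCast_iff _ _ _).mp h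
          rw [Nat.mod_eq_of_lt (by have := hgl i; omega),
            Nat.mod_eq_of_lt (by have := hgl j; omega)] at h2
          exact hgg h2
        refine ⟨0, by omega, (Finset.range (ℓ + 1)).filter (fun v =>
          (v + ((q - τ i % q) + τ j)) % q < ℓ + 1 ∧
          (gl i * v + ccv W (G i) ((((G i).val + 0 * W + (2 * W - τ j % (2 * W))) + τ i) % (2 * W))
              + ((p - τ i % p) + τ j)) % p
            = (gl j * ((v + ((q - τ i % q) + τ j)) % q)
              + ccv W (G j) ((((G i).val + 0 * W + (2 * W - τ j % (2 * W))) + τ j) % (2 * W))) % p),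
          ?_, ?_⟩
        · exact aux_card_le_one p hp q (ℓ + 1) _ _ _ _ (gl i) (gl j) hq2 hpw hgneZ
        · intro v hv hvS hcond
          apply hvS
          simp only [Finset.mem_filter, Finset.mem_range]
          exact ⟨hv, hcond⟩
    obtain ⟨c, hc1, S, hScard, hP2gen⟩ := hrow
    have hbadcard : (ms.biUnion (fun x => (Finset.range (ℓ + 1)).filter (fun v =>
        (v + ((q - τ i % q) + τ x)) % q < ℓ + 1 ∧
        (gl i * v + ccv W (G i) ((((G i).val + c * W + (2 * W - τ j % (2 * W))) + τ i) % (2 * W))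
            + ((p - τ i % p) + τ x)) % p
          = (gl x * ((v + ((q - τ i % q) + τ x)) % q)
            + ccv W (G x) ((((G i).val + c * W + (2 * W - τ j % (2 * W))) + τ x) % (2 * W))) % p))
        ∪ S).card ≤ ℓ := by
      have h1 : (ms.biUnion (fun x => (Finset.range (ℓ + 1)).filter (fun v =>
          (v + ((q - τ i % q) + τ x)) % q < ℓ + 1 ∧
          (gl i * v + ccv W (G i) ((((G i).val + c * W + (2 * W - τ j % (2 * W))) + τ i) % (2 * W))
              + ((p - τ i % p) + τ x)) % p
            = (gl x * ((v + ((q - τ i % q) + τ x)) % q)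
              + ccv W (G x) ((((G i).val + c * W + (2 * W - τ j % (2 * W))) + τ x) % (2 * W))) % p))).card
          ≤ ms.card := by
        refine le_trans (Finset.card_biUnion_le) ?_
        calc ∑ x ∈ ms, ((Finset.range (ℓ + 1)).filter (fun v =>
            (v + ((q - τ i % q) + τ x)) % q < ℓ + 1 ∧
            (gl i * v + ccv W (G i) ((((G i).val + c * W + (2 * W - τ j % (2 * W))) + τ i) % (2 * W))
                + ((p - τ i % p) + τ x)) % p
              = (gl x * ((v + ((q - τ i % q) + τ x)) % q)
                + ccv W (G x) ((((G i).val + c * W + (2 * W - τ j % (2 * W))) + τ x) % (2 * W))) % p)).card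
            ≤ ∑ _x ∈ ms, 1 := by
              refine Finset.sum_le_sum ?_
              intro x hx
              simp only [hms, Finset.mem_filter] at hx
              exact hBcard c x hx.2.2.2 hx.2.1
          _ = ms.card := by simp
      have h2 := Finset.card_union_le (ms.biUnion (fun x => (Finset.range (ℓ + 1)).filter (fun v =>
        (v + ((q - τ i % q) + τ x)) % q < ℓ + 1 ∧
        (gl i * v + ccv W (G i) ((((G i).val + c * W + (2 * W - τ j % (2 * W))) + τ i) % (2 * W))
            + ((p - τ i % p) + τ x)) % p
          = (gl x * ((v + ((q - τ i % q) + τ x)) % q)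
            + ccv W (G x) ((((G i).val + c * W + (2 * W - τ j % (2 * W))) + τ x) % (2 * W))) % p))) S
      omega
    obtain ⟨u, huw, hub⟩ : ∃ u, u < ℓ + 1 ∧ u ∉ (ms.biUnion (fun x => (Finset.range (ℓ + 1)).filter (fun v =>
        (v + ((q - τ i % q) + τ x)) % q < ℓ + 1 ∧
        (gl i * v + ccv W (G i) ((((G i).val + c * W + (2 * W - τ j % (2 * W))) + τ i) % (2 * W))
            + ((p - τ i % p) + τ x)) % p
          = (gl x * ((v + ((q - τ i % q) + τ x)) % q)
            + ccv W (G x) ((((G i).val + c * W + (2 * W - τ j % (2 * W))) + τ x) % (2 * W))) % p))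
        ∪ S) := by
      by_contra hcon
      push_neg at hcon
      have hsub : Finset.range (ℓ + 1) ⊆ _ := fun v hv => hcon v (Finset.mem_range.mp hv)
      have := Finset.card_le_card hsub
      rw [Finset.card_range] at this
      omega
    obtain ⟨t, htL, h1, h2, h3⟩ := engine K W ℓ p q hW0 hp0 hq0 hqp hpN hqW hwq G gl τ i j c u
      hc1 huw
      (by
        intro x hxi hxj hxG hcond
        apply hub
        refine Finset.mem_union_left _ (Finset.mem_biUnion.mpr ⟨x, ?_, ?_⟩)
        · simp only [hms, Finset.mem_filter, Finset.mem_univ, true_and]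
          exact ⟨hxi, hxj, hxG⟩
        · simp only [Finset.mem_filter, Finset.mem_range]
          exact ⟨huw, hcond⟩)
      (by
        intro hcond
        exact hP2gen u huw (fun hmem => hub (Finset.mem_union_right _ hmem)) hcond)
    refine ⟨t, htL, h1, h2, ?_⟩
    intro x hxi hxG
    have hxj : x ≠ j := by
      rintro rfl
      exact hGij hxG.symm
    exact h3 x hxi hxj hxG

private lemma aux_crt2 (q r₀ k₀ : ℕ) (hq0 : 0 < q) (hq8 : Nat.Coprime q 8) :
    ∃ t < 2 * 2 * (2 * q),
      (∀ a, (t + a) % (2 * 2 * (2 * q)) % 8 = (r₀ + a) % 8) ∧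
      (∀ a, (t + a) % (2 * 2 * (2 * q)) % q = (k₀ + a) % q) := by
  have hd8 : 8 ∣ 2 * 2 * (2 * q) := ⟨q, by ring⟩
  have hdq : q ∣ 2 * 2 * (2 * q) := ⟨8, by ring⟩
  have hL0 : 0 < 2 * 2 * (2 * q) := by omega
  obtain ⟨c1, hc18, hc1q⟩ := Nat.chineseRemainder hq8.symm r₀ k₀
  refine ⟨c1 % (2 * 2 * (2 * q)), Nat.mod_lt _ hL0, ?_, ?_⟩
  · intro a
    rw [Nat.mod_mod_of_dvd _ hd8]
    have h2 : c1 % (2 * 2 * (2 * q)) ≡ c1 [MOD 8] := Nat.mod_mod_of_dvd c1 hd8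
    exact (h2.add_right a).trans (hc18.add_right a)
  · intro a
    rw [Nat.mod_mod_of_dvd _ hdq]
    have h2 : c1 % (2 * 2 * (2 * q)) ≡ c1 [MOD q] := Nat.mod_mod_of_dvd c1 hdq
    exact (h2.add_right a).trans (hc1q.add_right a)

private def starSeq2 (q : ℕ) (n : Fin 2) : ℕ → SchedSym 2 := fun t =>
  if (t % 8 = 4 * n.val ∨ t % 8 = 4 * n.val + 1) ∧
      t % q ≠ (if t % 8 = 4 * n.val then 0 else n.val + 1) then
    SchedSym.T n
  else SchedSym.R ⟨1 - n.val, by omega⟩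

private lemma w2p2 (K q : ℕ) (G : Fin K → Fin 2) (hGinj : Function.Injective G)
    (hq3 : 3 ≤ q) (hq4 : Nat.Coprime q 4) :
    ∃ s : Fin K → ℕ → SchedSym 2, IsScheduleSet 2 K (2 * 2 * (2 * q)) G s := by
  have hq0 : 0 < q := by omega
  have hq2 : Nat.Coprime q 2 := Nat.Coprime.coprime_dvd_right (by norm_num) hq4
  have hq8 : Nat.Coprime q 8 := by
    have := hq2.pow_right 3
    simpa using this
  refine ⟨fun i => starSeq2 q (G i), ?_, ?_, ?_⟩
  · intro i t m h
    simp only [starSeq2] at h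
    split_ifs at h with hc
    all_goals first
      | (injection h with h'; exact h'.symm)
      | (cases h)
  · intro τ hτ i j hij hGij
    exact absurd (hGinj hGij) hij
  · intro τ hτ i j hGij
    have hvne : (G i).val ≠ (G j).val := fun h => hGij (Fin.ext h)
    have hiv := (G i).isLt
    have hjv := (G j).isLt
    have hmates : ∀ x : Fin K, x ≠ i → G x = G i → False := by
      intro x hxi hxG
      exact hxi (hGinj hxG)
    -- the receive symbol of j is R (G i)
    have hoth : (⟨1 - (G j).val, by omega⟩ : Fin 2) = G i := by
      apply Fin.ext
      show 1 - (G j).val = (G i).val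
      omega
    -- helper to finish once a suitable absolute row/column pair is found
    have finish : ∀ ρ κ : ℕ,
        (((ρ + τ i) % 8 = 4 * (G i).val ∨ (ρ + τ i) % 8 = 4 * (G i).val + 1) ∧
          (κ + τ i) % q ≠ (if (ρ + τ i) % 8 = 4 * (G i).val then 0 else (G i).val + 1)) →
        (¬ ((((ρ + τ j) % 8 = 4 * (G j).val ∨ (ρ + τ j) % 8 = 4 * (G j).val + 1) ∧
          (κ + τ j) % q ≠ (if (ρ + τ j) % 8 = 4 * (G j).val then 0 else (G j).val + 1)))) →
        ∃ t < 2 * 2 * (2 * q),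
          starSeq2 q (G i) ((t + τ i) % (2 * 2 * (2 * q))) = SchedSym.T (G i) ∧
          starSeq2 q (G j) ((t + τ j) % (2 * 2 * (2 * q))) = SchedSym.R (G i) ∧
          ∀ x : Fin K, x ≠ i → G x = G i →
            starSeq2 q (G x) ((t + τ x) % (2 * 2 * (2 * q))) ≠ SchedSym.T (G i) := by
      intro ρ κ hi hj
      obtain ⟨t, htL, h8, hQ⟩ := aux_crt2 q ρ κ hq0 hq8
      refine ⟨t, htL, ?_, ?_, ?_⟩
      · simp only [starSeq2]
        rw [h8 (τ i), hQ (τ i)]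
        rw [if_pos hi]
      · simp only [starSeq2]
        rw [h8 (τ j), hQ (τ j)]
        rw [if_neg hj]
        rw [hoth]
      · intro x hxi hxG
        exact absurd (hGinj hxG) hxi
    -- case analysis on the relative row shift
    set d8 : ℕ := (8 - τ i % 8) + τ j with hd8
    have hrow : ∀ a : ℕ, ((a + (8 - τ i % 8)) + τ j) % 8 = (a + d8) % 8 := by
      intro a
      congr 1
      omega
    have hrowi : ∀ a : ℕ, a < 8 → ((a + (8 - τ i % 8)) + τ i) % 8 = a := by
      intro a ha
      rw [aux_mod_shift 8 a (τ i) (by omega)]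
      exact Nat.mod_eq_of_lt ha
    have hcolJ : ∀ a : ℕ, a < q → ((a + (q - τ j % q)) + τ j) % q = a := by
      intro a ha
      rw [aux_mod_shift q a (τ j) hq0]
      exact Nat.mod_eq_of_lt ha
    set R0 : ℕ := (4 * (G i).val + d8) % 8 with hR0
    have hR1 : ((4 * (G i).val + 1 + (8 - τ i % 8)) + τ j) % 8 = (R0 + 1) % 8 := by
      rw [hrow, hR0, Nat.mod_add_mod]
      congr 1
      omega
    have hcolI : ∀ a : ℕ, a < q → ((a + (q - τ i % q)) + τ i) % q = a := by
      intro a ha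
      rw [aux_mod_shift q a (τ i) hq0]
      exact Nat.mod_eq_of_lt ha
    have h4m : 4 * (G i).val < 8 := by omega
    have h4m1 : 4 * (G i).val + 1 < 8 := by omega
    by_cases hA : (R0 = 4 * (G j).val ∨ R0 = 4 * (G j).val + 1)
    · by_cases hB : ((R0 + 1) % 8 = 4 * (G j).val ∨ (R0 + 1) % 8 = 4 * (G j).val + 1)
      · -- both rows trapped: R0 = 4 * nv
        have hR0eq : R0 = 4 * (G j).val := by
          rcases hA with h | h
          · exact h
          · exfalso
            have : (R0 + 1) % 8 = 4 * (G j).val + 2 := by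
              rw [h]
              exact Nat.mod_eq_of_lt (by omega)
            rcases hB with h' | h' <;> omega
        have hR1eq : (R0 + 1) % 8 = 4 * (G j).val + 1 := by
          rw [hR0eq]
          exact Nat.mod_eq_of_lt (by omega)
        set e : ℕ := ((q - τ j % q) + τ i) % q with he_def
        by_cases he : e = 0
        · -- option B : row 4m+1, column giving k_j = nv + 1
          apply finish ((4 * (G i).val + 1) + (8 - τ i % 8)) (((G j).val + 1) + (q - τ j % q))
          · constructor
            · exact Or.inr (hrowi (4 * (G i).val + 1) h4m1)
            · rw [hrowi (4 * (G i).val + 1) h4m1]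
              rw [if_neg (by omega : ¬ (4 * (G i).val + 1 = 4 * (G i).val))]
              have hki : ((((G j).val + 1) + (q - τ j % q)) + τ i) % q = (G j).val + 1 := by
                have e1 : (((G j).val + 1) + (q - τ j % q)) + τ i
                    = ((G j).val + 1) + ((q - τ j % q) + τ i) := by omega
                rw [e1, Nat.add_mod, ← he_def, he, Nat.add_zero, Nat.mod_mod]
                exact Nat.mod_eq_of_lt (by omega)
              rw [hki]
              omega
          · intro hc
            have hrj : ((((4 * (G i).val + 1) + (8 - τ i % 8)) + τ j)) % 8 = 4 * (G j).val + 1 := by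
              have e1 : (4 * (G i).val + 1) + (8 - τ i % 8) = 4 * (G i).val + 1 + (8 - τ i % 8) := rfl
              rw [e1, hR1, hR1eq]
            have hkj : ((((G j).val + 1) + (q - τ j % q)) + τ j) % q = (G j).val + 1 :=
              hcolJ ((G j).val + 1) (by omega)
            rw [hrj] at hc
            apply hc.2
            rw [hkj, if_neg (by omega : ¬ (4 * (G j).val + 1 = 4 * (G j).val))]
        · -- option A : row 4m, column giving k_j = 0
          apply finish (4 * (G i).val + (8 - τ i % 8)) (0 + (q - τ j % q))
          · constructor
            · exact Or.inl (hrowi (4 * (G i).val) h4m)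
            · rw [hrowi (4 * (G i).val) h4m]
              rw [if_pos rfl]
              have hki : ((0 + (q - τ j % q)) + τ i) % q = e := by
                rw [he_def]
                congr 1
                omega
              rw [hki]
              exact he
          · intro hc
            have hrj : (((4 * (G i).val + (8 - τ i % 8)) + τ j)) % 8 = 4 * (G j).val := by
              rw [hrow, ← hR0, hR0eq]
            have hkj : ((0 + (q - τ j % q)) + τ j) % q = 0 := hcolJ 0 (by omega)
            rw [hrj] at hc
            apply hc.2
            rw [hkj, if_pos rfl]
      · -- row 4m+1 free for j
        apply finish ((4 * (G i).val + 1) + (8 - τ i % 8)) (0 + (q - τ i % q))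
        · constructor
          · exact Or.inr (hrowi (4 * (G i).val + 1) h4m1)
          · rw [hrowi (4 * (G i).val + 1) h4m1]
            rw [if_neg (by omega : ¬ (4 * (G i).val + 1 = 4 * (G i).val))]
            have hki : ((0 + (q - τ i % q)) + τ i) % q = 0 := hcolI 0 (by omega)
            rw [hki]
            omega
        · intro hc
          have hrj : ((((4 * (G i).val + 1) + (8 - τ i % 8)) + τ j)) % 8 = (R0 + 1) % 8 := hR1
          rw [hrj] at hc
          exact hB hc.1
    · -- row 4m free for j
      apply finish (4 * (G i).val + (8 - τ i % 8)) (1 + (q - τ i % q))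
      · constructor
        · exact Or.inl (hrowi (4 * (G i).val) h4m)
        · rw [hrowi (4 * (G i).val) h4m]
          rw [if_pos rfl]
          have hki : ((1 + (q - τ i % q)) + τ i) % q = 1 := hcolI 1 (by omega)
          rw [hki]
          omega
      · intro hc
        have hrj : (((4 * (G i).val + (8 - τ i % 8)) + τ j)) % 8 = R0 := by
          rw [hrow, ← hR0]
        rw [hrj] at hc
        exact hA hc.1

/-- feasibility of Construction *: let `K, M` be positive integers
with `M ≤ K`, `1 ≤ W ≤ M`, and let the `K` nodes be partitioned into `W` nonempty
groups (given by the surjective assignment `G`) with largest group size `ℓ`. Set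
`w = ℓ + 1`, let `p` be a prime with `p ≥ max{w, 2W−2}`, and let `q` be coprime with
both `p` and `2W` with `q ≥ 2w−1`. Then there exists an `(M,K,L)`-schedule sequence
set with respect to this partition with period `L = 2Wpq`. -/
theorem construction_star_exists
    (K M W ℓ p q : ℕ) (hM : 0 < M) (hMK : M ≤ K) (hW : 1 ≤ W) (hWM : W ≤ M)
    (G : Fin K → Fin W) (hG : Function.Surjective G)
    (hℓmax : ∀ m : Fin W, groupSize G m ≤ ℓ)
    (hℓex : ∃ m : Fin W, groupSize G m = ℓ)
    (hp : p.Prime) (hpw : ℓ + 1 ≤ p) (hpW : 2 * W - 2 ≤ p)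
    (hqp : Nat.Coprime q p) (hqW : Nat.Coprime q (2 * W))
    (hq : 2 * (ℓ + 1) - 1 ≤ q) :
    ∃ s : Fin K → ℕ → SchedSym W, IsScheduleSet W K (2 * W * (p * q)) G s := by
  classical
  have hW0 : 0 < W := hW
  -- ℓ ≥ 1
  obtain ⟨m₀, hm₀⟩ := hℓex
  obtain ⟨i₀, hi₀⟩ := hG m₀
  have hl1 : 1 ≤ ℓ := by
    rw [← hm₀]
    have : i₀ ∈ Finset.univ.filter (fun x => G x = m₀) :=
      Finset.mem_filter.mpr ⟨Finset.mem_univ _, hi₀⟩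
    have := Finset.card_pos.mpr ⟨i₀, this⟩
    simpa [groupSize] using this
  -- labels
  set SS : Fin W → Finset (Fin K) := fun m => Finset.univ.filter (fun x => G x = m) with hSS
  have hmem : ∀ i : Fin K, i ∈ SS (G i) := fun i =>
    Finset.mem_filter.mpr ⟨Finset.mem_univ _, rfl⟩
  set idx : Fin W → Fin K → ℕ := fun m x =>
    if h : x ∈ SS m then (((SS m).orderIsoOfFin rfl).symm ⟨x, h⟩ : Fin (SS m).card).val else 0
    with hidx
  set gl : Fin K → ℕ := fun i => idx (G i) i with hgl_def
  have hgl : ∀ i, gl i < ℓ := by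
    intro i
    have h1 : gl i = (((SS (G i)).orderIsoOfFin rfl).symm ⟨i, hmem i⟩ : Fin (SS (G i)).card).val := by
      rw [hgl_def]
      simp only [hidx]
      rw [dif_pos (hmem i)]
    rw [h1]
    have h2 := (((SS (G i)).orderIsoOfFin rfl).symm ⟨i, hmem i⟩).isLt
    have h3 : (SS (G i)).card ≤ ℓ := hℓmax (G i)
    omega
  have hginj : ∀ i j : Fin K, G i = G j → gl i = gl j → i = j := by
    intro i j hGij hglij
    have h1 : gl i = (((SS (G i)).orderIsoOfFin rfl).symm ⟨i, hmem i⟩ : Fin (SS (G i)).card).val := by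
      rw [hgl_def]; simp only [hidx]; rw [dif_pos (hmem i)]
    have hjmem : j ∈ SS (G i) := by rw [hGij]; exact hmem j
    have h2 : gl j = (((SS (G i)).orderIsoOfFin rfl).symm ⟨j, hjmem⟩ : Fin (SS (G i)).card).val := by
      rw [hgl_def]; simp only [hidx]
      rw [show G j = G i from hGij.symm]
      rw [dif_pos hjmem]
    rw [h1, h2] at hglij
    have h3 : (((SS (G i)).orderIsoOfFin rfl).symm ⟨i, hmem i⟩)
        = (((SS (G i)).orderIsoOfFin rfl).symm ⟨j, hjmem⟩) := Fin.ext hglij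
    have h4 := ((SS (G i)).orderIsoOfFin rfl).symm.injective h3
    exact congrArg Subtype.val h4
  have hsize : ∀ m : Fin W, (Finset.univ.filter (fun x => G x = m)).card ≤ ℓ := fun m => hℓmax m
  rcases eq_or_ne p 2 with hp2 | hp2
  · -- p = 2 : then ℓ = 1 and W ≤ 2, all groups are singletons
    have hl2 : ℓ = 1 := by omega
    have hGinj : Function.Injective G := by
      intro a b hab
      by_contra hne
      have hsub : ({a, b} : Finset (Fin K)) ⊆ Finset.univ.filter (fun x => G x = G b) := by
        intro x hx
        rcases Finset.mem_insert.mp hx with h | h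
        · subst h; exact Finset.mem_filter.mpr ⟨Finset.mem_univ _, hab⟩
        · rw [Finset.mem_singleton] at h; subst h
          exact Finset.mem_filter.mpr ⟨Finset.mem_univ _, rfl⟩
      have h1 := Finset.card_le_card hsub
      rw [Finset.card_pair hne] at h1
      have h2 := hsize (G b)
      omega
    have hW2 : W ≤ 2 := by omega
    rcases (by omega : W = 1 ∨ W = 2) with hW1 | hW2'
    · subst hW1
      refine ⟨fun i _ => SchedSym.T (G i), ?_, ?_, ?_⟩
      · intro i t m h
        injection h with h'
        exact h'.symm
      · intro τ hτ i j hij hGij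
        exact absurd (hGinj hGij) hij
      · intro τ hτ i j hGij
        exact absurd (Subsingleton.elim (G i) (G j)) hGij
    · subst hW2'
      subst hp2
      have hq3 : 3 ≤ q := by omega
      have hq4 : Nat.Coprime q 4 := by
        have : (2 : ℕ) * 2 = 4 := by norm_num
        rw [← this]
        exact hqW
      obtain ⟨s, hs⟩ := w2p2 K q G hGinj hq3 hq4
      exact ⟨s, hs⟩
  · -- p odd : main construction
    exact main_case K W ℓ p q hW G gl hgl hginj hsize hp hp2 hpw hpW hqp hqW hq
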